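/- Let V and W be finite-dimensional real vector spaces and φ : V → W a linear map. If L ⊆ 𝕋W = W × W* is a Lagrangian subspace with respect to the pairing ⟨(u,ξ),(v,η)⟩ = ξ(v) + η(u), then the backward image φ^!(L) := {(u, η ∘ φ) : u ∈ V, η ∈ W*, (φ(u), η) ∈ L} is a Lagrangian subspace of 𝕋V = V × V*. -/

import Mathlib

open Module

variable {V W : Type*} [AddCommGroup V] [Module ℝ V] [AddCommGroup W] [Module ℝ W]

/-- The canonical symmetric pairing on the generalized tangent space `𝕋V = V × V*`:
`⟨(u,ξ),(v,η)⟩ = ξ(v) + η(u)`. -/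
noncomputable def gpair : (V × Module.Dual ℝ V) →ₗ[ℝ] (V × Module.Dual ℝ V) →ₗ[ℝ] ℝ :=
  LinearMap.mk₂ ℝ (fun a b => a.2 b.1 + b.2 a.1)
    (fun a a' b => by
      simp only [Prod.fst_add, Prod.snd_add, LinearMap.add_apply, map_add]; ring)
    (fun r a b => by
      simp only [Prod.smul_fst, Prod.smul_snd, LinearMap.smul_apply, map_smul,
        smul_eq_mul]; ring)
    (fun a b b' => by
      simp only [Prod.fst_add, Prod.snd_add, LinearMap.add_apply, map_add]; ring)
    (fun r a b => by
      simp only [Prod.smul_fst, Prod.smul_snd, LinearMap.smul_apply, map_smul,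
        smul_eq_mul]; ring)

/-- Orthogonal complement with respect to the canonical pairing on `𝕋V`. -/
noncomputable def gperp (S : Submodule ℝ (V × Module.Dual ℝ V)) :
    Submodule ℝ (V × Module.Dual ℝ V) where
  carrier := {a | ∀ b ∈ S, gpair a b = 0}
  add_mem' := by
    intro a b ha hb c hc
    rw [map_add, LinearMap.add_apply, ha c hc, hb c hc, add_zero]
  zero_mem' := by
    intro c hc
    rw [map_zero, LinearMap.zero_apply]
  smul_mem' := by
    intro r a ha c hc
    rw [map_smul, LinearMap.smul_apply, ha c hc, smul_zero]

/-- A subspace of `𝕋V` is Lagrangian if it equals its own orthogonal complement. -/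
def IsLagrangian (L : Submodule ℝ (V × Module.Dual ℝ V)) : Prop :=
  gperp L = L

/-- A linear map `π : V* → V` is skew-symmetric. -/
def IsSkew (π : Module.Dual ℝ V →ₗ[ℝ] V) : Prop :=
  ∀ ξ η : Module.Dual ℝ V, η (π ξ) = -(ξ (π η))

/-- The tangent product `L ⋆ R = {(u, ξ+η) : (u,ξ) ∈ L, (u,η) ∈ R}`. -/
def tanProd (L R : Submodule ℝ (V × Module.Dual ℝ V)) :
    Submodule ℝ (V × Module.Dual ℝ V) where
  carrier := {a | ∃ ξ η : Module.Dual ℝ V, (a.1, ξ) ∈ L ∧ (a.1, η) ∈ R ∧ a.2 = ξ + η}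
  add_mem' := by
    rintro a b ⟨ξ, η, h1, h2, h3⟩ ⟨ξ', η', h1', h2', h3'⟩
    refine ⟨ξ + ξ', η + η', ?_, ?_, ?_⟩
    · simpa [Prod.fst_add] using L.add_mem h1 h1'
    · simpa [Prod.fst_add] using R.add_mem h2 h2'
    · simp only [Prod.snd_add, h3, h3']; abel
  zero_mem' := ⟨0, 0, by convert L.zero_mem using 1 <;> simp [Prod.ext_iff], by convert R.zero_mem using 1 <;> simp [Prod.ext_iff], by simp⟩
  smul_mem' := by
    rintro r a ⟨ξ, η, h1, h2, h3⟩
    refine ⟨r • ξ, r • η, ?_, ?_, ?_⟩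
    · simpa [Prod.smul_fst] using L.smul_mem r h1
    · simpa [Prod.smul_fst] using R.smul_mem r h2
    · simp only [Prod.smul_snd, h3, smul_add]

/-- The cotangent product `L ⊛ R = {(u+v, ξ) : (u,ξ) ∈ L, (v,ξ) ∈ R}`. -/
def cotProd (L R : Submodule ℝ (V × Module.Dual ℝ V)) :
    Submodule ℝ (V × Module.Dual ℝ V) where
  carrier := {a | ∃ u v : V, (u, a.2) ∈ L ∧ (v, a.2) ∈ R ∧ a.1 = u + v}
  add_mem' := by
    rintro a b ⟨u, v, h1, h2, h3⟩ ⟨u', v', h1', h2', h3'⟩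
    refine ⟨u + u', v + v', ?_, ?_, ?_⟩
    · simpa [Prod.snd_add] using L.add_mem h1 h1'
    · simpa [Prod.snd_add] using R.add_mem h2 h2'
    · simp only [Prod.fst_add, h3, h3']; abel
  zero_mem' := ⟨0, 0, by convert L.zero_mem using 1 <;> simp [Prod.ext_iff], by convert R.zero_mem using 1 <;> simp [Prod.ext_iff], by simp⟩
  smul_mem' := by
    rintro r a ⟨u, v, h1, h2, h3⟩
    refine ⟨r • u, r • v, ?_, ?_, ?_⟩
    · simpa [Prod.smul_snd] using L.smul_mem r h1
    · simpa [Prod.smul_snd] using R.smul_mem r h2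
    · simp only [Prod.smul_fst, h3, smul_add]

/-- The backward image `φ^!(L) = {(u, η ∘ φ) : (φ(u), η) ∈ L}`. -/
def back (φ : V →ₗ[ℝ] W) (L : Submodule ℝ (W × Module.Dual ℝ W)) :
    Submodule ℝ (V × Module.Dual ℝ V) where
  carrier := {a | ∃ η : Module.Dual ℝ W, (φ a.1, η) ∈ L ∧ a.2 = η.comp φ}
  add_mem' := by
    rintro a b ⟨η, h1, h2⟩ ⟨η', h1', h2'⟩
    refine ⟨η + η', ?_, ?_⟩
    · simpa [Prod.fst_add, map_add] using L.add_mem h1 h1'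
    · simp only [Prod.snd_add, h2, h2', LinearMap.add_comp]
  zero_mem' := ⟨0, by convert L.zero_mem using 1 <;> simp [Prod.ext_iff], by simp⟩
  smul_mem' := by
    rintro r a ⟨η, h1, h2⟩
    refine ⟨r • η, ?_, ?_⟩
    · simpa [Prod.smul_fst, map_smul] using L.smul_mem r h1
    · simp only [Prod.smul_snd, h2, LinearMap.smul_comp]

/-- The forward image `φ_!(L) = {(φ(u), η) : (u, η ∘ φ) ∈ L}`. -/
def fwd (φ : V →ₗ[ℝ] W) (L : Submodule ℝ (V × Module.Dual ℝ V)) :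
    Submodule ℝ (W × Module.Dual ℝ W) where
  carrier := {b | ∃ u : V, φ u = b.1 ∧ (u, b.2.comp φ) ∈ L}
  add_mem' := by
    rintro a b ⟨u, h1, h2⟩ ⟨u', h1', h2'⟩
    refine ⟨u + u', ?_, ?_⟩
    · simp only [map_add, h1, h1', Prod.fst_add]
    · have := L.add_mem h2 h2'
      simpa [Prod.snd_add, LinearMap.add_comp] using this
  zero_mem' := ⟨0, by simp, by convert L.zero_mem using 1 <;> simp [Prod.ext_iff]⟩
  smul_mem' := by
    rintro r a ⟨u, h1, h2⟩
    refine ⟨r • u, ?_, ?_⟩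
    · simp only [map_smul, h1, Prod.smul_fst]
    · have := L.smul_mem r h2
      simpa [Prod.smul_snd, LinearMap.smul_comp] using this

/-- The graph `Gr(π) = {(π(ξ), ξ) : ξ ∈ V*}` of a map `π : V* → V`. -/
def gr (π : Module.Dual ℝ V →ₗ[ℝ] V) : Submodule ℝ (V × Module.Dual ℝ V) where
  carrier := {a | π a.2 = a.1}
  add_mem' := by
    intro a b ha hb
    simp only [Set.mem_setOf_eq, Prod.fst_add, Prod.snd_add, map_add] at *
    rw [ha, hb]
  zero_mem' := by simp
  smul_mem' := by
    intro r a ha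
    simp only [Set.mem_setOf_eq, Prod.smul_fst, Prod.smul_snd, map_smul] at *
    rw [ha]


section Aux

open Submodule LinearMap

variable {M N : Type*} [AddCommGroup M] [Module ℝ M] [AddCommGroup N] [Module ℝ N]

lemma aux_mem_gperp {S : Submodule ℝ (V × Module.Dual ℝ V)}
    {a : V × Module.Dual ℝ V} : a ∈ gperp S ↔ ∀ b ∈ S, gpair a b = 0 := Iff.rfl

lemma aux_mem_back {φ : V →ₗ[ℝ] W} {L : Submodule ℝ (W × Module.Dual ℝ W)}
    {a : V × Module.Dual ℝ V} :
    a ∈ back φ L ↔ ∃ η : Module.Dual ℝ W, (φ a.1, η) ∈ L ∧ a.2 = η.comp φ := Iff.rfl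

lemma aux_gpair_apply (a b : V × Module.Dual ℝ V) :
    gpair a b = a.2 b.1 + b.2 a.1 := rfl

/-- Rank-nullity for the restriction of a map to a submodule. -/
lemma aux_finrank_map_add [FiniteDimensional ℝ M] (f : M →ₗ[ℝ] N) (C : Submodule ℝ M) :
    finrank ℝ (C.map f) + finrank ℝ ((C ⊓ ker f : Submodule ℝ M)) = finrank ℝ C := by
  have h := LinearMap.finrank_range_add_finrank_ker (f.comp C.subtype)
  have hr : range (f.comp C.subtype) = C.map f := by
    rw [LinearMap.range_comp, Submodule.range_subtype]
  have hk : ker (f.comp C.subtype) = (ker f).comap C.subtype := LinearMap.ker_comp _ _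
  have hk2 : finrank ℝ ((ker f).comap C.subtype) = finrank ℝ ((C ⊓ ker f : Submodule ℝ M)) := by
    rw [← Submodule.finrank_map_subtype_eq C ((ker f).comap C.subtype),
      Submodule.map_comap_subtype]
  rw [hr, hk, hk2] at h
  exact h

lemma aux_finrank_add_ann [FiniteDimensional ℝ M] (S : Submodule ℝ M) :
    finrank ℝ S + finrank ℝ S.dualAnnihilator = finrank ℝ M := by
  have h : finrank ℝ (M ⧸ S) = finrank ℝ S.dualAnnihilator :=
    LinearEquiv.finrank_eq (Subspace.quotEquivAnnihilator S)
  rw [← h, add_comm, Submodule.finrank_quotient_add_finrank]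

/-- The dual annihilator of a preimage is the image of the dual annihilator. -/
lemma aux_ann_comap [FiniteDimensional ℝ M] [FiniteDimensional ℝ N]
    (f : M →ₗ[ℝ] N) (P : Submodule ℝ N) :
    (P.comap f).dualAnnihilator = P.dualAnnihilator.map f.dualMap := by
  refine (Submodule.eq_of_le_of_finrank_eq ?_ ?_).symm
  · rintro - ⟨ζ, hζ, rfl⟩
    rw [SetLike.mem_coe] at hζ
    rw [Submodule.mem_dualAnnihilator] at hζ ⊢
    intro x hx
    exact hζ (f x) hx
  · have h1 := aux_finrank_map_add f.dualMap P.dualAnnihilator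
    have e1 : (P.dualAnnihilator ⊓ ker f.dualMap : Submodule ℝ (Module.Dual ℝ N))
        = (P ⊔ range f).dualAnnihilator := by
      rw [f.ker_dualMap_eq_dualAnnihilator_range, Submodule.dualAnnihilator_sup_eq]
    rw [e1] at h1
    have h2 := aux_finrank_add_ann (P ⊔ range f)
    have h3 := aux_finrank_add_ann P
    have h4 := aux_finrank_add_ann (P.comap f)
    have h5 := Submodule.finrank_sup_add_finrank_inf_eq P (range f)
    have h6 := LinearMap.finrank_range_add_finrank_ker f
    have h7 := aux_finrank_map_add f (P.comap f)
    have e2 : (P.comap f).map f = P ⊓ range f := by rw [Submodule.map_comap_eq, inf_comm]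
    have e3 : (P.comap f ⊓ ker f : Submodule ℝ M) = ker f := by
      rw [inf_eq_right]
      intro x hx
      rw [LinearMap.mem_ker] at hx
      simp [Submodule.mem_comap, hx]
    rw [e2, e3] at h7
    omega

/-- `gperp` is the pullback of the dual annihilator along `gpair`. -/
lemma aux_gperp_eq (S : Submodule ℝ (V × Module.Dual ℝ V)) :
    gperp S = S.dualAnnihilator.comap (gpair (V := V)) := by
  ext a
  rw [Submodule.mem_comap, Submodule.mem_dualAnnihilator]
  exact Iff.rfl

lemma aux_gpair_bijective [FiniteDimensional ℝ V] :
    Function.Bijective (gpair (V := V)) := by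
  have hinj : Function.Injective (gpair (V := V)) := by
    rw [← LinearMap.ker_eq_bot, eq_bot_iff]
    rintro ⟨v, α⟩ h
    rw [LinearMap.mem_ker] at h
    have hα : α = 0 := by
      ext u
      have := congrArg (fun f => f (u, 0)) h
      simpa [aux_gpair_apply] using this
    have hv : v = 0 := by
      rw [← Module.forall_dual_apply_eq_zero_iff (R := ℝ)]
      intro ξ
      have := congrArg (fun f => f (0, ξ)) h
      simpa [aux_gpair_apply] using this
    simp [hα, hv]
  refine ⟨hinj, ?_⟩
  rwa [← LinearMap.injective_iff_surjective_of_finrank_eq_finrank]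
  exact Subspace.dual_finrank_eq.symm

lemma aux_finrank_gperp [FiniteDimensional ℝ V] (S : Submodule ℝ (V × Module.Dual ℝ V)) :
    finrank ℝ (gperp S) = finrank ℝ S.dualAnnihilator := by
  rw [aux_gperp_eq]
  exact LinearEquiv.finrank_eq
    (LinearEquiv.ofSubmodule' (LinearEquiv.ofBijective _ aux_gpair_bijective) S.dualAnnihilator)

lemma aux_lagrangian_isotropic {L : Submodule ℝ (V × Module.Dual ℝ V)}
    (hL : IsLagrangian L) {a b : V × Module.Dual ℝ V} (ha : a ∈ L) (hb : b ∈ L) :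
    gpair a b = 0 := by
  have ha' : a ∈ gperp L := hL.symm ▸ ha
  exact ha' b hb

lemma aux_lagrangian_finrank [FiniteDimensional ℝ V] {L : Submodule ℝ (V × Module.Dual ℝ V)}
    (hL : IsLagrangian L) : finrank ℝ L = finrank ℝ V := by
  have h1 := aux_finrank_gperp L
  have h2 := aux_finrank_add_ann L
  have h3 : finrank ℝ (V × Module.Dual ℝ V) = finrank ℝ V + finrank ℝ V := by
    rw [Module.finrank_prod, Subspace.dual_finrank_eq]
  rw [hL] at h1
  omega

end Aux

theorem stmt3 [FiniteDimensional ℝ V] [FiniteDimensional ℝ W]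
    (φ : V →ₗ[ℝ] W) (L : Submodule ℝ (W × Module.Dual ℝ W))
    (hL : IsLagrangian L) :
    IsLagrangian (back φ L) := by
  classical
  set P : Submodule ℝ W := L.map (LinearMap.fst ℝ W (Module.Dual ℝ W)) with hPdef
  set K : Submodule ℝ (Module.Dual ℝ W) := L.comap (LinearMap.inr ℝ W (Module.Dual ℝ W))
    with hKdef
  have hKmem : ∀ η : Module.Dual ℝ W, η ∈ K ↔ ((0 : W), η) ∈ L := fun η => Iff.rfl
  have hLn : finrank ℝ L = finrank ℝ W := aux_lagrangian_finrank hL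
  -- finrank P + finrank K = finrank W
  have hPK : finrank ℝ P + finrank ℝ K = finrank ℝ W := by
    have h1 := aux_finrank_map_add (LinearMap.fst ℝ W (Module.Dual ℝ W)) L
    have h2 : finrank ℝ ((L ⊓ LinearMap.ker (LinearMap.fst ℝ W (Module.Dual ℝ W)) :
        Submodule ℝ (W × Module.Dual ℝ W))) = finrank ℝ K := by
      have e1 : K.map (LinearMap.inr ℝ W (Module.Dual ℝ W))
          = LinearMap.range (LinearMap.inr ℝ W (Module.Dual ℝ W)) ⊓ L :=
        Submodule.map_comap_eq (LinearMap.inr ℝ W (Module.Dual ℝ W)) L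
      have e2 : LinearMap.range (LinearMap.inr ℝ W (Module.Dual ℝ W))
          = LinearMap.ker (LinearMap.fst ℝ W (Module.Dual ℝ W)) := LinearMap.range_inr ℝ W _
      have h3 : finrank ℝ K
          = finrank ℝ (K.map (LinearMap.inr ℝ W (Module.Dual ℝ W))) :=
        LinearEquiv.finrank_eq
          (Submodule.equivMapOfInjective (LinearMap.inr ℝ W (Module.Dual ℝ W))
            LinearMap.inr_injective K)
      rw [h3, e1, e2, inf_comm]
    rw [h2, hLn] at h1
    exact h1
  have hisoL : ∀ a ∈ L, ∀ b ∈ L, gpair a b = 0 := fun a ha b hb =>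
    aux_lagrangian_isotropic hL ha hb
  -- P = K.dualCoannihilator
  have hP : P = K.dualCoannihilator := by
    refine Submodule.eq_of_le_of_finrank_eq ?_ ?_
    · rintro - ⟨⟨w, ζ⟩, hwζ, rfl⟩
      rw [Submodule.mem_dualCoannihilator]
      intro η hη
      have := hisoL ((0 : W), η) ((hKmem η).1 hη) (w, ζ) hwζ
      simpa [aux_gpair_apply] using this
    · have := Subspace.finrank_add_finrank_dualCoannihilator_eq K
      omega
  -- P.dualAnnihilator = K
  have hK : P.dualAnnihilator = K := by
    refine (Submodule.eq_of_le_of_finrank_eq ?_ ?_).symm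
    · intro η hη
      rw [Submodule.mem_dualAnnihilator]
      rintro - ⟨⟨w, ζ⟩, hwζ, rfl⟩
      have := hisoL ((0 : W), η) ((hKmem η).1 hη) (w, ζ) hwζ
      simpa [aux_gpair_apply] using this
    · have := aux_finrank_add_ann P
      omega
  -- main equality
  refine le_antisymm ?_ ?_
  · -- gperp (back φ L) ≤ back φ L
    rintro ⟨v, α⟩ ha
    rw [aux_mem_gperp] at ha
    -- Step 1: φ v ∈ P
    have h0 : φ v ∈ P := by
      rw [hP, Submodule.mem_dualCoannihilator]
      intro η hη
      have hb : ((0 : V), η.comp φ) ∈ back φ L := by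
        rw [aux_mem_back]
        exact ⟨η, by simpa using (hKmem η).1 hη, rfl⟩
      have := ha _ hb
      simpa [aux_gpair_apply] using this
    obtain ⟨⟨w, η₀⟩, hη₀L, hw⟩ := h0
    obtain rfl : w = φ v := hw
    set β : Module.Dual ℝ V := α - η₀.comp φ with hβdef
    have hβ : β ∈ (P.comap φ).dualAnnihilator := by
      rw [Submodule.mem_dualAnnihilator]
      intro u hu
      rw [Submodule.mem_comap] at hu
      obtain ⟨⟨w', ζ⟩, hζL, hw'⟩ := hu
      obtain rfl : w' = φ u := hw'
      have h1 : α u + ζ (φ v) = 0 := by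
        have hb : (u, ζ.comp φ) ∈ back φ L := by
          rw [aux_mem_back]; exact ⟨ζ, hζL, rfl⟩
        simpa [aux_gpair_apply] using ha _ hb
      have h2 : η₀ (φ u) + ζ (φ v) = 0 := by
        simpa [aux_gpair_apply] using hisoL _ hη₀L _ hζL
      simp only [hβdef, LinearMap.sub_apply, LinearMap.comp_apply]
      linarith
    rw [aux_ann_comap, hK] at hβ
    obtain ⟨ζ, hζK, hζ⟩ := hβ
    rw [LinearMap.dualMap_apply'] at hζ
    rw [aux_mem_back]
    refine ⟨η₀ + ζ, ?_, ?_⟩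
    · have : ((φ v, η₀ + ζ) : W × Module.Dual ℝ W) = (φ v, η₀) + (0, ζ) := by
        simp [Prod.ext_iff]
      rw [this]
      exact L.add_mem hη₀L ((hKmem ζ).1 hζK)
    · rw [LinearMap.add_comp, hζ, hβdef]
      abel
  · -- back φ L ≤ gperp (back φ L)
    intro a ha
    rw [aux_mem_back] at ha
    obtain ⟨η₁, h₁, hα₁⟩ := ha
    rw [aux_mem_gperp]
    intro b hb
    rw [aux_mem_back] at hb
    obtain ⟨η₂, h₂, hα₂⟩ := hb
    have := hisoL _ h₁ _ h₂
    rw [aux_gpair_apply] at this ⊢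
    simp only [hα₁, hα₂, LinearMap.comp_apply] at *
    linarith
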